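/- With the attribute setup below, assume the family v is pairwise orthogonal and all vectors v(i,j) have the same norm c. Then for any two distinct indices i ≠ i' in {1,…,l}, the centered representations of two base concepts from the same attribute satisfy ⟨u_i, u_{i'}⟩ = −c²/(σ²·l·l'). In particular, if c > 0, base-concept representations within the same attribute are non-orthogonal. -/

import Mathlib

open scoped InnerProductSpace
open Finset

theorem stmt_7
    {d l l' : ℕ} (hd : 1 ≤ d) (hl : 1 ≤ l) (hl' : 1 ≤ l')
    (σ : ℝ) (hσ : 0 < σ)
    (v : Fin l → Fin l' → EuclideanSpace ℝ (Fin d))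
    (vhat : Fin l → EuclideanSpace ℝ (Fin d))
    (vhat' : Fin l' → EuclideanSpace ℝ (Fin d))
    (μ : EuclideanSpace ℝ (Fin d))
    (u : Fin l → EuclideanSpace ℝ (Fin d))
    (u' : Fin l' → EuclideanSpace ℝ (Fin d))
    (hvhat : ∀ i, vhat i = (1 / (l' : ℝ)) • ∑ j, v i j)
    (hvhat' : ∀ j, vhat' j = (1 / (l : ℝ)) • ∑ i, v i j)
    (hμ : μ = (1 / ((l : ℝ) * (l' : ℝ))) • ∑ i, ∑ j, v i j)
    (hu : ∀ i, u i = (1 / σ) • (vhat i - μ))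
    (hu' : ∀ j, u' j = (1 / σ) • (vhat' j - μ))
    (horth : ∀ i j i' j', (i, j) ≠ (i', j') → ⟪v i j, v i' j'⟫_ℝ = 0)
    (c : ℝ) (hc : ∀ i j, ‖v i j‖ = c)
    : ∀ i i', i ≠ i' →
      ⟪u i, u i'⟫_ℝ = -(c ^ 2) / (σ ^ 2 * (l : ℝ) * (l' : ℝ)) ∧
        (0 < c → ⟪u i, u i'⟫_ℝ ≠ 0) := by
  have hlpos : (0:ℝ) < l := by exact_mod_cast hl
  have hl'pos : (0:ℝ) < l' := by exact_mod_cast hl'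
  have hin : ∀ i j i' j', ⟪v i j, v i' j'⟫_ℝ =
      if i = i' ∧ j = j' then c ^ 2 else 0 := by
    intro i j i' j'
    by_cases h : i = i' ∧ j = j'
    · obtain ⟨rfl, rfl⟩ := h
      rw [if_pos ⟨rfl, rfl⟩, real_inner_self_eq_norm_sq, hc]
    · rw [if_neg h]
      exact horth _ _ _ _ (by simpa [Prod.ext_iff] using h)
  have hSS : ∀ i₁ i₂, ⟪(∑ j, v i₁ j), (∑ j, v i₂ j)⟫_ℝ =
      if i₁ = i₂ then (l' : ℝ) * c ^ 2 else 0 := by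
    intro i₁ i₂
    rw [sum_inner]
    simp_rw [inner_sum, hin]
    by_cases h : i₁ = i₂
    · subst h
      simp [Finset.sum_ite_eq, mul_comm]
    · simp [h]
  set T := ∑ i, ∑ j, v i j with hT
  have hST : ∀ i₁, ⟪(∑ j, v i₁ j), T⟫_ℝ = (l' : ℝ) * c ^ 2 := by
    intro i₁
    rw [hT, inner_sum]
    simp_rw [hSS]
    simp
  have hTS : ∀ i₁, ⟪T, (∑ j, v i₁ j)⟫_ℝ = (l' : ℝ) * c ^ 2 := by
    intro i₁
    rw [real_inner_comm]; exact hST i₁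
  have hTT : ⟪T, T⟫_ℝ = (l : ℝ) * (l' : ℝ) * c ^ 2 := by
    rw [hT, sum_inner]
    simp_rw [← hT, hST]
    simp [mul_assoc]
  intro i i' hne
  have key : ⟪u i, u i'⟫_ℝ = -(c ^ 2) / (σ ^ 2 * (l : ℝ) * (l' : ℝ)) := by
    rw [hu, hu, hvhat, hvhat, hμ]
    rw [real_inner_smul_left, real_inner_smul_right]
    rw [inner_sub_left, inner_sub_right, inner_sub_right]
    rw [real_inner_smul_left, real_inner_smul_left, real_inner_smul_right,
      real_inner_smul_right, real_inner_smul_left, real_inner_smul_right]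
    rw [hSS, if_neg hne, hST, hTS, real_inner_smul_left, real_inner_smul_right, hTT]
    field_simp
    ring
  refine ⟨key, fun hcpos => ?_⟩
  rw [key]
  have : (0:ℝ) < c ^ 2 := by positivity
  have h2 : (0:ℝ) < σ ^ 2 * l * l' := by positivity
  intro h
  rw [div_eq_zero_iff] at h
  rcases h with h | h
  · nlinarith
  · linarith
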